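/- Let 0 < t < π/3 and set u = cot(t/2). Then u > √3, the quantity u' = (u² + 3)/(2u) satisfies u' = (2 − cos t)/sin t and √3 < u' < u, and consequently there exists a unique t' ∈ (0, π/3) with cot(t'/2) = u', and this t' satisfies t' > t. -/

import Mathlib

open Real

lemma cot_inv_tan {x : ℝ} (hx : 0 < x) (hx2 : x < Real.pi / 2) :
    Real.cot x = (Real.tan x)⁻¹ := by
  rw [Real.cot_eq_cos_div_sin, Real.tan_eq_sin_div_cos]
  rw [inv_div]

lemma cot_lt_cot {x y : ℝ} (hx : 0 < x) (hxy : x < y) (hy : y < Real.pi / 2) :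
    Real.cot y < Real.cot x := by
  have htx : 0 < Real.tan x := Real.tan_pos_of_pos_of_lt_pi_div_two hx (hxy.trans hy)
  have htxy : Real.tan x < Real.tan y :=
    Real.tan_lt_tan_of_nonneg_of_lt_pi_div_two hx.le hy hxy
  rw [cot_inv_tan hx (hxy.trans hy), cot_inv_tan (hx.trans hxy) hy]
  exact inv_strictAnti₀ htx htxy

lemma cot_pi_div_six : Real.cot (Real.pi / 6) = Real.sqrt 3 := by
  have h6 : (0:ℝ) < Real.pi / 6 := by positivity
  rw [cot_inv_tan h6 (by linarith [Real.pi_pos]), Real.tan_pi_div_six]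
  rw [one_div, inv_inv]

theorem stmt_12 (t u u' : ℝ) (ht0 : 0 < t) (ht1 : t < Real.pi / 3)
    (hu : u = Real.cot (t / 2)) (hu' : u' = (u ^ 2 + 3) / (2 * u)) :
    Real.sqrt 3 < u ∧
    u' = (2 - Real.cos t) / Real.sin t ∧
    Real.sqrt 3 < u' ∧ u' < u ∧
    (∃! t' : ℝ, t' ∈ Set.Ioo 0 (Real.pi / 3) ∧ Real.cot (t' / 2) = u') ∧
    (∀ t' : ℝ, t' ∈ Set.Ioo 0 (Real.pi / 3) → Real.cot (t' / 2) = u' → t < t') := by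
  have hpi := Real.pi_pos
  have hs3 : (0:ℝ) < Real.sqrt 3 := by positivity
  -- u > √3
  have h1 : Real.sqrt 3 < u := by
    rw [hu, ← cot_pi_div_six]
    exact cot_lt_cot (by linarith) (by linarith) (by linarith)
  have hu0 : 0 < u := hs3.trans h1
  -- identity
  have hsh : 0 < Real.sin (t / 2) := Real.sin_pos_of_pos_of_lt_pi (by linarith) (by linarith)
  have hch : 0 < Real.cos (t / 2) := Real.cos_pos_of_mem_Ioo ⟨by linarith, by linarith⟩
  have hst : Real.sin t = 2 * Real.sin (t/2) * Real.cos (t/2) := by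
    rw [← Real.sin_two_mul]; ring_nf
  have hpyth : Real.sin (t/2) ^ 2 + Real.cos (t/2) ^ 2 = 1 := Real.sin_sq_add_cos_sq _
  have hct : Real.cos t = 1 - 2 * Real.sin (t/2) ^ 2 := by
    have h := Real.cos_two_mul (t/2)
    have h2 : 2 * (t/2) = t := by ring
    rw [h2] at h; linarith
  have hucs : u = Real.cos (t/2) / Real.sin (t/2) := by
    rw [hu, Real.cot_eq_cos_div_sin]
  have h2 : u' = (2 - Real.cos t) / Real.sin t := by
    rw [hu', hucs, hst, hct]
    field_simp
    linear_combination hpyth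
  -- √3 < u' and u' < u
  have hs3sq : Real.sqrt 3 ^ 2 = 3 := Real.sq_sqrt (by norm_num)
  have h3 : Real.sqrt 3 < u' := by
    rw [hu']
    rw [lt_div_iff₀ (by linarith)]
    nlinarith [sq_nonneg (u - Real.sqrt 3)]
  have h4 : u' < u := by
    rw [hu']
    rw [div_lt_iff₀ (by linarith)]
    nlinarith
  have hu'0 : 0 < u' := hs3.trans h3
  -- general: solutions of cot(x/2)=v for v > √3
  -- existence
  have htan6 : Real.tan (Real.pi / 6) = (Real.sqrt 3)⁻¹ := by
    rw [Real.tan_pi_div_six, one_div]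
  set t' := 2 * Real.arctan u'⁻¹ with ht'def
  have hat0 : 0 < Real.arctan u'⁻¹ := by
    have := Real.arctan_strictMono (show (0:ℝ) < u'⁻¹ by positivity)
    rwa [Real.arctan_zero] at this
  have hat6 : Real.arctan u'⁻¹ < Real.pi / 6 := by
    have : Real.arctan u'⁻¹ < Real.arctan (Real.sqrt 3)⁻¹ :=
      Real.arctan_strictMono (inv_strictAnti₀ hs3 h3)
    rwa [← htan6, Real.arctan_tan (by linarith) (by linarith)] at this
  have ht'mem : t' ∈ Set.Ioo 0 (Real.pi / 3) := ⟨by positivity, by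
    simp only [ht'def]; linarith⟩
  have ht'cot : Real.cot (t' / 2) = u' := by
    have h2' : t' / 2 = Real.arctan u'⁻¹ := by ring
    rw [h2', cot_inv_tan hat0 (by linarith), Real.tan_arctan, inv_inv]
  -- injectivity / comparison of solutions
  have key : ∀ x ∈ Set.Ioo 0 (Real.pi / 3), Real.cot (x / 2) = u' → t < x := by
    intro x hx hcx
    by_contra hle
    push_neg at hle
    rcases lt_or_eq_of_le hle with hlt | heq
    · have : Real.cot (t / 2) < Real.cot (x / 2) :=
        cot_lt_cot (by linarith [hx.1]) (by linarith) (by linarith)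
      rw [hcx, ← hu] at this; linarith
    · rw [heq] at hcx; rw [← hu] at hcx; linarith [hcx ▸ h4]
  refine ⟨h1, h2, h3, h4, ⟨t', ⟨ht'mem, ht'cot⟩, ?_⟩, key⟩
  rintro y ⟨hy, hcy⟩
  by_contra hne
  rcases lt_or_gt_of_ne hne with hlt | hlt
  · have : Real.cot (t' / 2) < Real.cot (y / 2) :=
      cot_lt_cot (by linarith [hy.1]) (by linarith) (by linarith [ht'mem.2])
    rw [hcy, ht'cot] at this; exact lt_irrefl _ this
  · have : Real.cot (y / 2) < Real.cot (t' / 2) :=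
      cot_lt_cot (by linarith [ht'mem.1]) (by linarith) (by linarith [hy.2])
    rw [hcy, ht'cot] at this; exact lt_irrefl _ this
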